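/- arXiv:1304.0868 — 6 statements merged into one kernel-verified Lean document; each statement's English description precedes it below -/
import Mathlib

section
/- Let E be a finite-dimensional real normed vector space, let A : E → ℝ be a convex and superlinear function, let x₀ ∈ E, let I be a (possibly infinite) index set, and let (Fᵢ)_{i∈I} be a family of flats of A such that x₀ lies in the relative interior of Fᵢ for every i ∈ I. Then there exists a flat F of A which contains Fᵢ for every i ∈ I and which has x₀ in its relative interior. -/
open Set

section Aux
variable {E : Type*} [NormedAddCommGroup E] [NormedSpace ℝ E]

/-- If `x₀` is in the intrinsic interior of `s`, then for every `x ∈ s` one can move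
slightly past `x₀` away from `x` while staying in `s`. -/
lemma radial_of_mem_intrinsicInterior {s : Set E} {x₀ : E}
    (h : x₀ ∈ intrinsicInterior ℝ s) :
    ∀ x ∈ s, ∃ ε : ℝ, 0 < ε ∧ x₀ + ε • (x₀ - x) ∈ s := by
  intro x hx
  rw [mem_intrinsicInterior] at h
  obtain ⟨y, hy, hyx⟩ := h
  have hys : y ∈ ((↑) ⁻¹' s : Set (affineSpan ℝ s)) := interior_subset hy
  have hx₀s : x₀ ∈ s := by rw [← hyx]; exact hys
  have hx₀S : x₀ ∈ affineSpan ℝ s := subset_affineSpan ℝ _ hx₀s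
  have hxS : x ∈ affineSpan ℝ s := subset_affineSpan ℝ _ hx
  have hmem : ∀ t : ℝ, x₀ + t • (x₀ - x) ∈ affineSpan ℝ s := by
    intro t
    have := AffineSubspace.smul_vsub_vadd_mem (affineSpan ℝ s) t hx₀S hxS hx₀S
    simpa [vsub_eq_sub, vadd_eq_add, add_comm] using this
  set c : ℝ → affineSpan ℝ s := fun t => ⟨x₀ + t • (x₀ - x), hmem t⟩ with hc
  have hccont : Continuous c := by
    apply Continuous.subtype_mk
    fun_prop
  have hc0 : c 0 = y := by
    apply Subtype.ext
    simp [hc, hyx]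
  have hnhds : c ⁻¹' (interior ((↑) ⁻¹' s : Set (affineSpan ℝ s))) ∈ nhds (0:ℝ) := by
    apply hccont.continuousAt.preimage_mem_nhds
    rw [hc0]
    exact isOpen_interior.mem_nhds hy
  obtain ⟨δ, hδ, hball⟩ := Metric.mem_nhds_iff.1 hnhds
  refine ⟨δ/2, by positivity, ?_⟩
  have hb : (δ/2 : ℝ) ∈ Metric.ball (0:ℝ) δ := by
    rw [Metric.mem_ball, Real.dist_eq, sub_zero, abs_of_pos (by positivity)]
    linarith
  have hfin : c (δ/2) ∈ ((↑) ⁻¹' s : Set (affineSpan ℝ s)) := interior_subset (hball hb)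
  exact hfin

end Aux

lemma radial_mem_intrinsicInterior {E : Type*} [NormedAddCommGroup E] [NormedSpace ℝ E]
    [FiniteDimensional ℝ E] {C : Set E} (hC : Convex ℝ C) {x₀ : E} (hx₀ : x₀ ∈ C)
    (hrad : ∀ y ∈ C, ∃ ε : ℝ, 0 < ε ∧ x₀ + ε • (x₀ - y) ∈ C) :
    x₀ ∈ intrinsicInterior ℝ C := by
  set T := affineSpan ℝ C with hT
  haveI : Nonempty T := ⟨⟨x₀, subset_affineSpan ℝ C hx₀⟩⟩
  set p₀ : T := ⟨x₀, subset_affineSpan ℝ C hx₀⟩ with hp₀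
  set C'' : Set T.direction := {v | x₀ - (v : E) ∈ C} with hC''
  have hC''conv : Convex ℝ C'' := by
    intro v hv w hw a b ha hb hab
    have key : x₀ - ((a • v + b • w : T.direction) : E) = a • (x₀ - v) + b • (x₀ - w) := by
      push_cast
      match_scalars <;> simp [hab] <;> ring
    show x₀ - ((a • v + b • w : T.direction) : E) ∈ C
    rw [key]
    exact hC hv hw ha hb hab
  have h0 : (0 : T.direction) ∈ C'' := by simpa [hC''] using hx₀
  have hspan : affineSpan ℝ C'' = ⊤ := by
    rw [AffineSubspace.affineSpan_eq_top_iff_vectorSpan_eq_top_of_nonempty ℝ _ _ ⟨0, h0⟩]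
    have h1 : Submodule.span ℝ C'' ≤ vectorSpan ℝ C'' := by
      rw [Submodule.span_le]
      intro v hv
      have := vsub_mem_vectorSpan ℝ hv h0
      simpa using this
    rw [eq_top_iff]
    refine le_trans ?_ h1
    intro w _
    have hw : (w : E) ∈ vectorSpan ℝ C := by
      rw [← direction_affineSpan]; exact w.2
    rw [vectorSpan_eq_span_vsub_set_left ℝ hx₀] at hw
    have himg : ((x₀ - ·) '' C : Set E) ⊆ (T.direction.subtype '' C'') := by
      rintro - ⟨c, hc, rfl⟩
      have hmem : x₀ - c ∈ T.direction :=
        AffineSubspace.vsub_mem_direction (subset_affineSpan ℝ C hx₀)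
          (subset_affineSpan ℝ C hc)
      refine ⟨⟨x₀ - c, hmem⟩, ?_, rfl⟩
      show x₀ - (x₀ - c) ∈ C
      simpa using hc
    have hmemspan : (w : E) ∈ Submodule.span ℝ (T.direction.subtype '' C'') :=
      Submodule.span_mono himg hw
    rw [← Submodule.map_span] at hmemspan
    obtain ⟨u, hu, huw⟩ := hmemspan
    have huw' : u = w := Subtype.ext huw
    subst huw'
    simpa using hu
  obtain ⟨z, hz⟩ := (hC''conv.interior_nonempty_iff_affineSpan_eq_top).2 hspan
  have hz' : z ∈ C'' := interior_subset hz
  obtain ⟨ε, hε, hy⟩ := hrad (x₀ - (z : E)) hz'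
  have hw : (-ε • z : T.direction) ∈ C'' := by
    show x₀ - ((-ε • z : T.direction) : E) ∈ C
    push_cast
    have : x₀ - (-ε • (z : E)) = x₀ + ε • (x₀ - (x₀ - z)) := by
      match_scalars <;> ring
    rw [this]; exact hy
  have hcombo : (0 : T.direction) ∈ interior C'' := by
    have h1 : (0:ℝ) < ε / (1 + ε) := by positivity
    have h2 : (0:ℝ) ≤ 1 / (1 + ε) := by positivity
    have h3 : ε / (1 + ε) + 1 / (1 + ε) = 1 := by field_simp; ring
    have hmm := hC''conv.combo_interior_self_mem_interior hz hw h1 h2 h3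
    have heq : (ε / (1 + ε)) • z + (1 / (1 + ε)) • (-ε • z : T.direction) = 0 := by
      match_scalars; field_simp; ring
    rwa [heq] at hmm
  rw [mem_intrinsicInterior]
  refine ⟨p₀, ?_, rfl⟩
  set e := (AffineIsometryEquiv.constVSub ℝ p₀).toHomeomorph with he
  have hpre : ((↑) ⁻¹' C : Set T) = e ⁻¹' C'' := by
    ext p
    show ((p : E) ∈ C) ↔ x₀ - ((p₀ -ᵥ p : T.direction) : E) ∈ C
    have : ((p₀ -ᵥ p : T.direction) : E) = x₀ - (p : E) := rfl
    rw [this]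
    simp
  rw [hpre, ← Homeomorph.preimage_interior]
  show (e p₀ : T.direction) ∈ interior C''
  have : e p₀ = 0 := by
    show p₀ -ᵥ p₀ = 0
    simp
  rwa [this]

/-- Existence of a flat of a convex superlinear function containing a
family of flats, each having `x₀` in its relative interior, with `x₀` in its
relative interior. -/
theorem flats_with_common_relint_point_contained_in_flat
    {E : Type*} [NormedAddCommGroup E] [NormedSpace ℝ E] [FiniteDimensional ℝ E]
    (A : E → ℝ)
    (hA_conv : ConvexOn ℝ Set.univ A)
    (hA_sl : ∀ K : ℝ, 0 ≤ K → ∃ C : ℝ, ∀ x : E, K * ‖x‖ - C ≤ A x)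
    (x₀ : E) {I : Type*} (F : I → Set E)
    (hF_flat : ∀ i : I, Convex ℝ (F i) ∧
      ∃ (ℓ : E →L[ℝ] ℝ) (b : ℝ), ∀ x ∈ F i, A x = ℓ x + b)
    (hx₀ : ∀ i : I, x₀ ∈ intrinsicInterior ℝ (F i)) :
    ∃ G : Set E,
      (Convex ℝ G ∧ ∃ (ℓ : E →L[ℝ] ℝ) (b : ℝ), ∀ x ∈ G, A x = ℓ x + b) ∧
      (∀ i : I, F i ⊆ G) ∧ x₀ ∈ intrinsicInterior ℝ G := by
  classical
  -- A is continuous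
  have hcont : Continuous A := by
    exact continuousOn_univ.1 (hA_conv.continuousOn isOpen_univ)
  -- radial property of the F i at x₀
  have hradF : ∀ i : I, ∀ x ∈ F i, ∃ ε : ℝ, 0 < ε ∧ x₀ + ε • (x₀ - x) ∈ F i :=
    fun i => radial_of_mem_intrinsicInterior (hx₀ i)
  have hx₀F : ∀ i : I, x₀ ∈ F i := fun i => intrinsicInterior_subset (hx₀ i)
  -- Separate the strict epigraph from (x₀, A x₀)
  set S : Set (E × ℝ) := {p | A p.1 < p.2} with hSdef
  have hSopen : IsOpen S := isOpen_lt (hcont.comp continuous_fst) continuous_snd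
  have hSconv : Convex ℝ S := by
    intro p hp q hq a b ha hb hab
    simp only [hSdef, Set.mem_setOf_eq] at hp hq ⊢
    have h1 : A (a • p + b • q).1 ≤ a * A p.1 + b * A q.1 := by
      have := hA_conv.2 (mem_univ p.1) (mem_univ q.1) ha hb hab
      simpa [smul_eq_mul] using this
    have h2 : (a • p + b • q).2 = a * p.2 + b * q.2 := rfl
    rw [h2]
    rcases ha.eq_or_lt with rfl | ha'
    · have hb1 : b = 1 := by linarith
      subst hb1
      simp only [zero_smul, zero_add, one_smul, zero_mul, one_mul] at h1 ⊢
      exact lt_of_le_of_lt h1 hq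
    rcases hb.eq_or_lt with rfl | hb'
    · have ha1 : a = 1 := by linarith
      subst ha1
      simp only [zero_smul, add_zero, one_smul, zero_mul, one_mul] at h1 ⊢
      exact lt_of_le_of_lt h1 hp
    calc A (a • p + b • q).1 ≤ a * A p.1 + b * A q.1 := h1
      _ < a * p.2 + b * q.2 := by
          apply add_lt_add
          · exact (mul_lt_mul_iff_right₀ ha').2 hp
          · exact (mul_lt_mul_iff_right₀ hb').2 hq
  have hx₀S : (x₀, A x₀) ∉ S := by simp [hSdef]
  obtain ⟨f, hf⟩ := geometric_hahn_banach_open_point hSconv hSopen hx₀S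
  set c : ℝ := f ((0:E), (1:ℝ)) with hcdef
  set ℓ0 : E →L[ℝ] ℝ := f.comp (ContinuousLinearMap.inl ℝ E ℝ) with hl0def
  have key : ∀ p : E × ℝ, f p = ℓ0 p.1 + p.2 * c := by
    intro p
    have hp : p = ((p.1, 0) : E × ℝ) + p.2 • ((0:E), (1:ℝ)) := by
      ext <;> simp
    rw [hp, map_add, map_smul]
    simp [hl0def, hcdef, smul_eq_mul]
  have hc : c < 0 := by
    have h := hf (x₀, A x₀ + 1) (by simp [hSdef])
    rw [key, key] at h
    simp only at h
    ring_nf at h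
    linarith
  have hcne : c ≠ 0 := hc.ne
  -- the "tilted" linear functional g x = ℓ0 x + A x * c is maximized at x₀
  have hle : ∀ x : E, ℓ0 x + A x * c ≤ ℓ0 x₀ + A x₀ * c := by
    intro x
    by_contra hlt
    push_neg at hlt
    set L : ℝ := ℓ0 x + A x * c with hL
    set R : ℝ := ℓ0 x₀ + A x₀ * c with hR
    have hδ : 0 < (L - R) / (-c) := div_pos (by linarith) (by linarith)
    have h2 := hf (x, A x + (L - R) / (-c)) (by simp [hSdef]; linarith)
    rw [key, key] at h2
    simp only at h2
    have hdc : (L - R) / (-c) * c = -(L - R) := by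
      rw [div_mul_eq_mul_div, mul_div_assoc, div_neg, div_self hcne]; ring
    have hexp : ℓ0 x + (A x + (L - R) / (-c)) * c = L + (L - R) / (-c) * c := by
      rw [hL]; ring
    rw [hexp, hdc] at h2
    rw [← hR] at h2
    linarith
  -- the equality set is convex and contains every F i
  set Geq : Set E := {x | ℓ0 x + A x * c = ℓ0 x₀ + A x₀ * c} with hGeqdef
  have hGeqconv : Convex ℝ Geq := by
    intro x hx y hy a b ha hb hab
    simp only [hGeqdef, Set.mem_setOf_eq] at hx hy ⊢
    have h1 : A (a • x + b • y) ≤ a * A x + b * A y := by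
      have := hA_conv.2 (mem_univ x) (mem_univ y) ha hb hab
      simpa [smul_eq_mul] using this
    have h2 : (a * A x + b * A y) * c ≤ A (a • x + b • y) * c :=
      mul_le_mul_of_nonpos_right h1 hc.le
    have h3 : ℓ0 (a • x + b • y) = a * ℓ0 x + b * ℓ0 y := by
      simp [map_add, map_smul, smul_eq_mul]
    have h4 : ℓ0 (a • x + b • y) + A (a • x + b • y) * c ≤ ℓ0 x₀ + A x₀ * c := hle _
    have h5 : a * (ℓ0 x + A x * c) + b * (ℓ0 y + A y * c) = ℓ0 x₀ + A x₀ * c := by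
      rw [hx, hy]; linear_combination (ℓ0 x₀ + A x₀ * c) * hab
    have h6 : ℓ0 x₀ + A x₀ * c ≤ ℓ0 (a • x + b • y) + A (a • x + b • y) * c := by
      rw [← h5, h3]
      nlinarith [h2]
    exact le_antisymm h4 h6
  have hFGeq : ∀ i : I, F i ⊆ Geq := by
    intro i x hx
    obtain ⟨ε, hε, hyF⟩ := hradF i x hx
    set y : E := x₀ + ε • (x₀ - x) with hy
    obtain ⟨ℓi, bi, hflat⟩ := (hF_flat i).2
    have hεne : (1:ℝ) + ε ≠ 0 := by positivity
    set a : ℝ := 1 / (1 + ε) with ha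
    set b : ℝ := ε / (1 + ε) with hb
    have hab : a + b = 1 := by rw [ha, hb]; field_simp
    have ha' : 0 < a := by rw [ha]; positivity
    have hb' : 0 < b := by rw [hb]; positivity
    have hxcomb : a • y + b • x = x₀ := by
      rw [hy, ha, hb]
      match_scalars <;> field_simp <;> ring
    -- affine combination identity for A
    have hli : ℓi x₀ = a * ℓi y + b * ℓi x := by
      rw [← hxcomb]; simp [map_add, map_smul, smul_eq_mul]
    have hA0 : A x₀ = a * A y + b * A x := by
      rw [hflat x₀ (hx₀F i), hflat y hyF, hflat x hx]
      linear_combination hli - bi * hab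
    have hl0 : ℓ0 x₀ = a * ℓ0 y + b * ℓ0 x := by
      rw [← hxcomb]; simp [map_add, map_smul, smul_eq_mul]
    -- combination identity for g
    have hgid : a * (ℓ0 y + A y * c) + b * (ℓ0 x + A x * c) = ℓ0 x₀ + A x₀ * c := by
      linear_combination -hl0 - c * hA0
    have hgx : ℓ0 x + A x * c ≤ ℓ0 x₀ + A x₀ * c := hle x
    have hgy : ℓ0 y + A y * c ≤ ℓ0 x₀ + A x₀ * c := hle y
    show ℓ0 x + A x * c = ℓ0 x₀ + A x₀ * c
    have h7 : a * (ℓ0 x₀ + A x₀ * c) + b * (ℓ0 x₀ + A x₀ * c) = ℓ0 x₀ + A x₀ * c := by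
      linear_combination (ℓ0 x₀ + A x₀ * c) * hab
    have h8 : a * (ℓ0 y + A y * c) ≤ a * (ℓ0 x₀ + A x₀ * c) :=
      mul_le_mul_of_nonneg_left hgy ha'.le
    have h9 : b * (ℓ0 x₀ + A x₀ * c) ≤ b * (ℓ0 x + A x * c) := by linarith
    have h10 : ℓ0 x₀ + A x₀ * c ≤ ℓ0 x + A x * c := le_of_mul_le_mul_left h9 hb'
    exact le_antisymm hgx h10
  have hx₀Geq : x₀ ∈ Geq := rfl
  -- the flat G
  set G : Set E := convexHull ℝ (insert x₀ (⋃ i, F i)) with hGdef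
  have hG_conv : Convex ℝ G := convex_convexHull ℝ _
  have hGsub : G ⊆ Geq := by
    apply convexHull_min _ hGeqconv
    intro y hy
    rcases Set.mem_insert_iff.1 hy with rfl | hy'
    · exact hx₀Geq
    · obtain ⟨i, hi⟩ := Set.mem_iUnion.1 hy'
      exact hFGeq i hi
  have hFG : ∀ i : I, F i ⊆ G := by
    intro i
    exact (Set.subset_iUnion F i).trans ((Set.subset_insert _ _).trans (subset_convexHull ℝ _))
  have hx₀G : x₀ ∈ G := subset_convexHull ℝ _ (Set.mem_insert _ _)
  -- interpolation
  have hint : ∀ (y : E) (ε δ : ℝ), 0 < δ → δ ≤ ε → x₀ + ε • (x₀ - y) ∈ G →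
      x₀ + δ • (x₀ - y) ∈ G := by
    intro y ε δ hδ hδε hyG
    have hε : 0 < ε := lt_of_lt_of_le hδ hδε
    have hεne : ε ≠ 0 := hε.ne'
    have h1 : (0:ℝ) ≤ 1 - δ/ε := by
      rw [sub_nonneg]
      exact (div_le_one hε).2 hδε
    have h2 : (0:ℝ) ≤ δ/ε := by positivity
    have h3 : (1 - δ/ε) + δ/ε = 1 := by ring
    have hmm := hG_conv hx₀G hyG h1 h2 h3
    have heq : (1 - δ/ε) • x₀ + (δ/ε) • (x₀ + ε • (x₀ - y)) = x₀ + δ • (x₀ - y) := by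
      match_scalars <;> field_simp <;> ring
    rwa [heq] at hmm
  -- radial property of G
  have hradG : ∀ y ∈ G, ∃ ε : ℝ, 0 < ε ∧ x₀ + ε • (x₀ - y) ∈ G := by
    have hsub : G ⊆ {y | y ∈ G ∧ ∃ ε : ℝ, 0 < ε ∧ x₀ + ε • (x₀ - y) ∈ G} := by
      apply convexHull_min
      · intro y hy
        rcases Set.mem_insert_iff.1 hy with rfl | hy'
        · refine ⟨hx₀G, 1, one_pos, ?_⟩
          simpa using hx₀G
        · obtain ⟨i, hi⟩ := Set.mem_iUnion.1 hy'
          obtain ⟨ε, hε, hmem⟩ := hradF i y hi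
          exact ⟨hFG i hi, ε, hε, hFG i hmem⟩
      · rintro y ⟨hyG, ε₁, hε₁, hy1⟩ z ⟨hzG, ε₂, hε₂, hz1⟩ a b ha hb hab
        refine ⟨hG_conv hyG hzG ha hb hab, min ε₁ ε₂, lt_min hε₁ hε₂, ?_⟩
        have hy2 := hint y ε₁ (min ε₁ ε₂) (lt_min hε₁ hε₂) (min_le_left _ _) hy1
        have hz2 := hint z ε₂ (min ε₁ ε₂) (lt_min hε₁ hε₂) (min_le_right _ _) hz1
        have hmm := hG_conv hy2 hz2 ha hb hab
        obtain rfl : b = 1 - a := by linarith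
        have heq : a • (x₀ + (min ε₁ ε₂) • (x₀ - y)) + (1 - a) • (x₀ + (min ε₁ ε₂) • (x₀ - z))
            = x₀ + (min ε₁ ε₂) • (x₀ - (a • y + (1 - a) • z)) := by
          match_scalars <;> ring
        rwa [heq] at hmm
    intro y hy
    exact (hsub hy).2
  -- the affine structure on G
  refine ⟨G, ⟨hG_conv, (-c⁻¹) • ℓ0, c⁻¹ * (ℓ0 x₀ + A x₀ * c), ?_⟩, hFG,
    radial_mem_intrinsicInterior hG_conv hx₀G hradG⟩
  intro x hxG
  have hx : ℓ0 x + A x * c = ℓ0 x₀ + A x₀ * c := hGsub hxG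
  show A x = (-c⁻¹) • ℓ0 x + c⁻¹ * (ℓ0 x₀ + A x₀ * c)
  rw [smul_eq_mul]
  field_simp
  linear_combination hx
end

section
/- Let E be a finite-dimensional real inner product space, let A : E → ℝ be a convex and superlinear function, let x ∈ E, and let y ∈ E be a subgradient of A at x. Then for every flat F of A containing x in its relative interior, y is a subgradient of A at every point x' of F. -/
open RealInnerProductSpace

/-- If `x` is in the intrinsic interior of `F` and `x' ∈ F`, then we can move a little
past `x` away from `x'` and stay in `F`. -/
lemma exists_pos_smul_mem_of_mem_intrinsicInterior
    {E : Type*} [NormedAddCommGroup E] [NormedSpace ℝ E]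
    {F : Set E} {x x' : E} (hxF : x ∈ intrinsicInterior ℝ F) (hx' : x' ∈ F) :
    ∃ t : ℝ, 0 < t ∧ x + t • (x - x') ∈ F := by
  obtain ⟨w, hw_int, hw⟩ := mem_intrinsicInterior.mp hxF
  have hxmem : x ∈ affineSpan ℝ F := by
    rw [← hw]; exact w.2
  have hx'mem : x' ∈ affineSpan ℝ F := subset_affineSpan ℝ F hx'
  have hmemS : ∀ s : ℝ, s • (x - x') + x' ∈ affineSpan ℝ F := fun s =>
    AffineSubspace.smul_vsub_vadd_mem _ s hxmem hx'mem hx'mem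
  set G : ℝ → affineSpan ℝ F := fun s => ⟨s • (x - x') + x', hmemS s⟩ with hG
  have hGcont : Continuous G := by
    apply Continuous.subtype_mk
    exact (continuous_id.smul continuous_const).add continuous_const
  have hopen : IsOpen (G ⁻¹' (interior ((↑) ⁻¹' F : Set (affineSpan ℝ F)))) :=
    isOpen_interior.preimage hGcont
  have h1 : (1 : ℝ) ∈ G ⁻¹' (interior ((↑) ⁻¹' F : Set (affineSpan ℝ F))) := by
    have : G 1 = w := by
      apply Subtype.ext
      simp [hG, hw]
    simpa [this] using hw_int
  obtain ⟨ε, hε, hball⟩ := Metric.isOpen_iff.mp hopen 1 h1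
  refine ⟨ε / 2, by linarith, ?_⟩
  have hs : (1 + ε / 2 : ℝ) ∈ Metric.ball (1 : ℝ) ε := by
    simp only [Metric.mem_ball, Real.dist_eq]
    rw [abs_of_nonneg (by linarith)]
    linarith
  have := interior_subset (hball hs)
  have h2 : ((G (1 + ε / 2) : affineSpan ℝ F) : E) ∈ F := this
  have h3 : ((G (1 + ε / 2) : affineSpan ℝ F) : E) = x + (ε / 2) • (x - x') := by
    simp only [hG]
    have : x' = x - (x - x') := by abel
    rw [add_smul, one_smul]
    nth_rewrite 2 [this]
    abel
  rwa [h3] at h2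

/-- A subgradient at a point in the relative interior of a flat of a
convex superlinear function is a subgradient at every point of the flat. -/
theorem subgradient_on_flat
    {E : Type*} [NormedAddCommGroup E] [InnerProductSpace ℝ E] [FiniteDimensional ℝ E]
    (A : E → ℝ)
    (hA_conv : ConvexOn ℝ Set.univ A)
    (hA_sl : ∀ K : ℝ, 0 ≤ K → ∃ C : ℝ, ∀ x : E, K * ‖x‖ - C ≤ A x)
    (x y : E)
    (hy : ∀ z : E, A x + ⟪y, z - x⟫ ≤ A z)
    (F : Set E)
    (hF_conv : Convex ℝ F)
    (hF_affine : ∃ (ℓ : E →L[ℝ] ℝ) (b : ℝ), ∀ u ∈ F, A u = ℓ u + b)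
    (hxF : x ∈ intrinsicInterior ℝ F) :
    ∀ x' ∈ F, ∀ z : E, A x' + ⟪y, z - x'⟫ ≤ A z := by
  intro x' hx' z
  have hxmem : x ∈ F := intrinsicInterior_subset hxF
  obtain ⟨ℓ, b, hℓ⟩ := hF_affine
  obtain ⟨t, ht, hmem⟩ := exists_pos_smul_mem_of_mem_intrinsicInterior hxF hx'
  set x'' := x + t • (x - x') with hx''
  have e1 : A x + ⟪y, x'' - x⟫ ≤ A x'' := hy x''
  have e2 : ⟪y, x'' - x⟫ = t * ⟪y, x - x'⟫ := by
    rw [hx'']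
    simp [real_inner_smul_right]
  have e3 : A x'' + t * A x' = (1 + t) * A x := by
    rw [hℓ _ hmem, hℓ _ hx', hℓ _ hxmem]
    simp only [hx'', map_add, map_smul, map_sub, smul_eq_mul]
    ring
  -- A x' ≤ A x + ⟪y, x' - x⟫
  have e4 : ⟪y, x - x'⟫ + ⟪y, x' - x⟫ = 0 := by
    rw [← inner_add_right]
    simp
  have key : A x' ≤ A x + ⟪y, x' - x⟫ := by
    nlinarith [e1, e2, e3, e4, ht]
  have hz := hy z
  have e5 : ⟪y, z - x⟫ = ⟪y, z - x'⟫ + ⟪y, x' - x⟫ := by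
    rw [← inner_add_right]
    congr 1
    abel
  linarith
end

section
/- Let E be a finite-dimensional real inner product space, let A : E → ℝ be a convex and superlinear function, let x ∈ E, let y ∈ E be a subgradient of A at x, and set S := { z ∈ E : y is a subgradient of A at z }. If x lies in the relative interior of S, then S is a flat of A containing x in its relative interior, and every flat F of A containing x in its relative interior satisfies F ⊆ S; i.e., S is the largest flat of A containing x in its relative interior. -/
open RealInnerProductSpace

lemma extend_of_mem_intrinsicInterior
    {E : Type*} [NormedAddCommGroup E] [InnerProductSpace ℝ E]
    {s : Set E} {x z : E} (hx : x ∈ intrinsicInterior ℝ s) (hz : z ∈ s) :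
    ∃ t : ℝ, 0 < t ∧ x + t • (x - z) ∈ s := by
  rw [mem_intrinsicInterior] at hx
  obtain ⟨X, hX, hXx⟩ := hx
  have hxspan : x ∈ affineSpan ℝ s := hXx ▸ X.2
  have hzspan : z ∈ affineSpan ℝ s := subset_affineSpan ℝ s hz
  have hmem : ∀ t : ℝ, x + t • (x - z) ∈ affineSpan ℝ s := fun t => by
    have := AffineSubspace.smul_vsub_vadd_mem (affineSpan ℝ s) t hxspan hzspan hxspan
    simpa [vsub_eq_sub, vadd_eq_add, add_comm] using this
  let G : ℝ → affineSpan ℝ s := fun t => ⟨x + t • (x - z), hmem t⟩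
  have hGcont : Continuous G := by
    apply Continuous.subtype_mk
    continuity
  have hG0 : G 0 = X := Subtype.ext (by simp [G, hXx])
  have hnhds : G ⁻¹' (interior ((↑) ⁻¹' s : Set (affineSpan ℝ s))) ∈ nhds (0 : ℝ) := by
    apply hGcont.continuousAt.preimage_mem_nhds
    exact isOpen_interior.mem_nhds (hG0 ▸ hX)
  obtain ⟨ε, hε, hball⟩ := Metric.mem_nhds_iff.mp hnhds
  refine ⟨ε / 2, by positivity, ?_⟩
  have : G (ε / 2) ∈ interior ((↑) ⁻¹' s : Set (affineSpan ℝ s)) := by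
    apply hball
    simp [Real.norm_eq_abs, abs_of_pos, hε, half_lt_self hε, abs_of_nonneg (le_of_lt (half_pos hε))]
  have h2 : G (ε / 2) ∈ ((↑) ⁻¹' s : Set (affineSpan ℝ s)) := interior_subset this
  exact h2

/-- If `x` lies in the relative interior of the set `S` of points where
`y` is a subgradient of a convex superlinear function `A`, then `S` is the largest
flat of `A` containing `x` in its relative interior. -/
theorem subgradient_locus_is_largest_flat
    {E : Type*} [NormedAddCommGroup E] [InnerProductSpace ℝ E] [FiniteDimensional ℝ E]
    (A : E → ℝ)
    (hA_conv : ConvexOn ℝ Set.univ A)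
    (hA_sl : ∀ K : ℝ, 0 ≤ K → ∃ C : ℝ, ∀ x : E, K * ‖x‖ - C ≤ A x)
    (x y : E)
    (hy : ∀ z : E, A x + ⟪y, z - x⟫ ≤ A z)
    (S : Set E)
    (hS : S = {z : E | ∀ w : E, A z + ⟪y, w - z⟫ ≤ A w})
    (hxS : x ∈ intrinsicInterior ℝ S) :
    (Convex ℝ S ∧ ∃ (ℓ : E →L[ℝ] ℝ) (b : ℝ), ∀ z ∈ S, A z = ℓ z + b) ∧
    x ∈ intrinsicInterior ℝ S ∧
    (∀ F : Set E,
      (Convex ℝ F ∧ ∃ (ℓ : E →L[ℝ] ℝ) (b : ℝ), ∀ z ∈ F, A z = ℓ z + b) →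
      x ∈ intrinsicInterior ℝ F → F ⊆ S) := by
  subst hS
  refine ⟨⟨?_, ?_⟩, hxS, ?_⟩
  · -- convexity
    intro z₁ hz₁ z₂ hz₂ a b ha hb hab
    intro w
    have h1 := hz₁ w
    have h2 := hz₂ w
    have hA := hA_conv.2 (Set.mem_univ z₁) (Set.mem_univ z₂) ha hb hab
    have hin : ⟪y, w - (a • z₁ + b • z₂)⟫ = a * ⟪y, w - z₁⟫ + b * ⟪y, w - z₂⟫ := by
      have hw : w - (a • z₁ + b • z₂) = a • (w - z₁) + b • (w - z₂) := by
        have : a • w + b • w = w := by rw [← add_smul, hab, one_smul]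
        rw [smul_sub, smul_sub]
        rw [show a • w - a • z₁ + (b • w - b • z₂) = (a • w + b • w) - (a • z₁ + b • z₂) by abel,
          this]
      rw [hw, inner_add_right, real_inner_smul_right, real_inner_smul_right]
    simp only [smul_eq_mul] at hA
    rw [hin]
    have e1 := mul_le_mul_of_nonneg_left h1 ha
    have e2 := mul_le_mul_of_nonneg_left h2 hb
    have e3 : a * A w + b * A w = A w := by rw [← add_mul, hab, one_mul]
    nlinarith [e1, e2, e3]
  · -- affine on S
    refine ⟨innerSL ℝ y, A x - ⟪y, x⟫, fun z hz => ?_⟩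
    have h1 := hy z
    have h2 := hz x
    simp only [inner_sub_right] at h1 h2 ⊢
    simp only [coe_innerSL_apply, innerSL_apply_apply]
    linarith
  · -- largest flat
    rintro F ⟨hFconv, ℓ, b, hℓ⟩ hxF z hzF
    intro w
    have hxF' : x ∈ F := intrinsicInterior_subset hxF
    obtain ⟨t, ht, hx'⟩ := extend_of_mem_intrinsicInterior hxF hzF
    have hAx' : A (x + t • (x - z)) = A x + t * (A x - A z) := by
      rw [hℓ _ hx', hℓ _ hxF', hℓ _ hzF]
      simp [map_add, map_smul, map_sub]
      ring
    have hsub := hy (x + t • (x - z))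
    have hin : ⟪y, (x + t • (x - z)) - x⟫ = t * ⟪y, x - z⟫ := by
      rw [show (x + t • (x - z)) - x = t • (x - z) by abel, real_inner_smul_right]
    rw [hin, hAx'] at hsub
    have key : ⟪y, x - z⟫ ≤ A x - A z := by
      have h' : t * ⟪y, x - z⟫ ≤ t * (A x - A z) := by linarith
      exact le_of_mul_le_mul_left h' ht
    have hw := hy w
    simp only [inner_sub_right] at key hw ⊢
    linarith
end

section
/- Let E be a finite-dimensional real inner product space and let A : E → ℝ be a convex and superlinear function. Then for every y ∈ E the supremum sup_{x ∈ E} (⟪y, x⟫ − A x) is finite and is attained: there exists x ∈ E such that ⟪y, x⟫ − A x ≥ ⟪y, z⟫ − A z for all z ∈ E. Equivalently, every y ∈ E is a subgradient of A at some point of E. -/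
open RealInnerProductSpace

/-- For a convex superlinear function `A` on a finite-dimensional inner
product space, the supremum defining the Fenchel conjugate is finite and attained at
every `y`; equivalently every `y` is a subgradient of `A` at some point. -/
theorem fenchel_sup_attained
    {E : Type*} [NormedAddCommGroup E] [InnerProductSpace ℝ E] [FiniteDimensional ℝ E]
    (A : E → ℝ)
    (hA_conv : ConvexOn ℝ Set.univ A)
    (hA_sl : ∀ K : ℝ, 0 ≤ K → ∃ C : ℝ, ∀ x : E, K * ‖x‖ - C ≤ A x)
    (y : E) :
    BddAbove (Set.range fun x : E => ⟪y, x⟫ - A x) ∧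
    (∃ x : E, ∀ z : E, ⟪y, z⟫ - A z ≤ ⟪y, x⟫ - A x) ∧
    (∃ x : E, ∀ z : E, A x + ⟪y, z - x⟫ ≤ A z) := by
  set f : E → ℝ := fun x => ⟪y, x⟫ - A x with hf
  obtain ⟨C, hC⟩ := hA_sl (‖y‖ + 1) (by positivity)
  have key : ∀ x : E, f x ≤ C - ‖x‖ := by
    intro x
    have h1 : ⟪y, x⟫ ≤ ‖y‖ * ‖x‖ := real_inner_le_norm y x
    have h2 := hC x
    simp only [hf]
    nlinarith
  have hAcont : Continuous A :=
    continuousOn_univ.mp (hA_conv.continuousOn isOpen_univ)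
  have hfc : Continuous f := by
    exact (continuous_const.inner continuous_id).sub hAcont
  -- choose radius
  set R := max (C - f 0) 0 with hR
  have hout : ∀ x : E, R ≤ ‖x‖ → f x ≤ f 0 := by
    intro x hx
    have := key x
    have : C - ‖x‖ ≤ f 0 := by
      have : C - f 0 ≤ R := le_max_left _ _
      linarith [hx.trans' this]
    linarith [key x]
  have hcompact : IsCompact (Metric.closedBall (0 : E) R) :=
    isCompact_closedBall 0 R
  have hne : (Metric.closedBall (0 : E) R).Nonempty :=
    ⟨0, Metric.mem_closedBall_self (le_max_right _ _)⟩
  obtain ⟨x, hxmem, hxmax⟩ := hcompact.exists_isMaxOn hne hfc.continuousOn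
  have mem0 : (0:E) ∈ Metric.closedBall (0 : E) R := Metric.mem_closedBall_self (le_max_right _ _)
  have hglobal : ∀ z : E, f z ≤ f x := by
    intro z
    by_cases hz : z ∈ Metric.closedBall (0 : E) R
    · exact hxmax hz
    · have hzR : R ≤ ‖z‖ := by
        simp [Metric.mem_closedBall, dist_zero_right] at hz
        exact hz.le
      exact (hout z hzR).trans (hxmax mem0)
  have h0 : f 0 ≤ f x := hxmax mem0
  refine ⟨⟨f x, ?_⟩, ⟨x, hglobal⟩, ⟨x, ?_⟩⟩
  · rintro v ⟨z, rfl⟩; exact hglobal z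
  · intro z
    have := hglobal z
    simp only [hf] at this
    rw [inner_sub_right]
    linarith
end

section
/- Let E be a finite-dimensional real inner product space, let A : E → ℝ be a convex and superlinear function, and let U ⊆ E be an open set. Define V := { y ∈ E : there exists x ∈ U such that y is a subgradient of A at x }. If for every y ∈ V the set { x ∈ E : y is a subgradient of A at x } consists of exactly one point, then V is an open subset of E. -/
open RealInnerProductSpace

lemma exists_subgrad_point
    {E : Type*} [NormedAddCommGroup E] [InnerProductSpace ℝ E] [FiniteDimensional ℝ E]
    (A : E → ℝ)
    (hA_conv : ConvexOn ℝ Set.univ A)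
    (hA_sl : ∀ K : ℝ, 0 ≤ K → ∃ C : ℝ, ∀ x : E, K * ‖x‖ - C ≤ A x)
    (y : E) : ∃ x : E, ∀ z : E, A x + ⟪y, z - x⟫ ≤ A z := by
  have hAcont : Continuous A := by
    rw [← continuousOn_univ]
    exact hA_conv.continuousOn isOpen_univ
  set g : E → ℝ := fun z => ⟪y, z⟫ - A z with hg
  have hgcont : Continuous g := by
    exact ((innerSL ℝ y).continuous).sub hAcont
  obtain ⟨C, hC⟩ := hA_sl (‖y‖ + 1) (by positivity)
  set R : ℝ := |C - g 0| + 1 with hR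
  have hball : (0 : E) ∈ Metric.closedBall (0 : E) R := by
    simp [hR]
    positivity
  obtain ⟨x, hxball, hxmax⟩ :=
    (isCompact_closedBall (0:E) R).exists_isMaxOn ⟨0, hball⟩
      (hgcont.continuousOn)
  have hout : ∀ z : E, R < ‖z‖ → g z < g 0 := by
    intro z hz
    have h1 : g z ≤ C - ‖z‖ := by
      have h2 := hC z
      have h3 : ⟪y, z⟫ ≤ ‖y‖ * ‖z‖ := real_inner_le_norm y z
      simp only [hg]
      nlinarith [norm_nonneg z]
    have : C - ‖z‖ < g 0 := by
      have : C - g 0 ≤ |C - g 0| := le_abs_self _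
      simp only [hR] at hz
      linarith
    linarith
  have hglobal : ∀ z : E, g z ≤ g x := by
    intro z
    by_cases hz : z ∈ Metric.closedBall (0:E) R
    · exact hxmax hz
    · have hz' : R < ‖z‖ := by
        simpa [Metric.mem_closedBall, dist_zero_right] using not_le.mp (by simpa [Metric.mem_closedBall, dist_zero_right] using hz)
      exact le_trans (hout z hz').le (hxmax hball)
  refine ⟨x, fun z => ?_⟩
  have := hglobal z
  simp only [hg] at this
  rw [inner_sub_right]
  linarith

/-- If every vector `y` obtained as a subgradient of a convex
superlinear function `A` at a point of an open set `U` is a subgradient at exactly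
one point of `E`, then the set `V` of such vectors is open. -/
theorem legendre_image_open_of_unique_subgradient
    {E : Type*} [NormedAddCommGroup E] [InnerProductSpace ℝ E] [FiniteDimensional ℝ E]
    (A : E → ℝ)
    (hA_conv : ConvexOn ℝ Set.univ A)
    (hA_sl : ∀ K : ℝ, 0 ≤ K → ∃ C : ℝ, ∀ x : E, K * ‖x‖ - C ≤ A x)
    (U : Set E) (hU : IsOpen U)
    (V : Set E)
    (hV : V = {y : E | ∃ x ∈ U, ∀ z : E, A x + ⟪y, z - x⟫ ≤ A z})
    (huniq : ∀ y ∈ V, ∃ x : E, {z : E | ∀ w : E, A z + ⟪y, w - z⟫ ≤ A w} = {x}) :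
    IsOpen V := by
  rw [Metric.isOpen_iff]
  intro y₀ hy₀
  by_contra hcon
  push_neg at hcon
  -- build sequence yₙ → y₀ with yₙ ∉ V
  have hseq : ∀ n : ℕ, ∃ y : E, dist y y₀ < 1 / (n + 1) ∧ y ∉ V := by
    intro n
    obtain ⟨y, hy1, hy2⟩ := Set.not_subset.mp (hcon (1 / (n + 1)) (by positivity))
    exact ⟨y, by simpa [Metric.mem_ball] using hy1, hy2⟩
  choose ys hys1 hys2 using hseq
  have hys_tendsto : Filter.Tendsto ys Filter.atTop (nhds y₀) := by
    rw [tendsto_iff_dist_tendsto_zero]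
    apply squeeze_zero (fun n => dist_nonneg) (fun n => (hys1 n).le)
    exact tendsto_one_div_add_atTop_nhds_zero_nat
  have hysnorm : ∀ n, ‖ys n‖ ≤ ‖y₀‖ + 1 := by
    intro n
    have h1 : dist (ys n) y₀ < 1 := lt_of_lt_of_le (hys1 n) (by
      rw [div_le_one (by positivity)]; linarith [Nat.cast_nonneg (α := ℝ) n])
    calc ‖ys n‖ ≤ ‖ys n - y₀‖ + ‖y₀‖ := by
          simpa using norm_add_le (ys n - y₀) y₀
      _ ≤ ‖y₀‖ + 1 := by rw [← dist_eq_norm] at *; linarith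
  -- choose maximizers
  have hmax : ∀ n : ℕ, ∃ x : E, ∀ z : E, A x + ⟪ys n, z - x⟫ ≤ A z :=
    fun n => exists_subgrad_point A hA_conv hA_sl (ys n)
  choose xs hxs using hmax
  -- xs n ∉ U
  have hxsU : ∀ n, xs n ∉ U := by
    intro n hnU
    exact hys2 n (by rw [hV]; exact ⟨xs n, hnU, hxs n⟩)
  -- uniform bound
  obtain ⟨C, hC⟩ := hA_sl (‖y₀‖ + 2) (by positivity)
  have hbound : ∀ n, ‖xs n‖ ≤ A 0 + C := by
    intro n
    have h1 := hxs n 0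
    rw [zero_sub, inner_neg_right] at h1
    have h2 : ⟪ys n, xs n⟫ ≤ ‖ys n‖ * ‖xs n‖ := real_inner_le_norm _ _
    have h3 := hC (xs n)
    have h4 := hysnorm n
    nlinarith [norm_nonneg (xs n), norm_nonneg (ys n)]
  -- compactness: convergent subsequence
  set R : ℝ := A 0 + C with hRdef
  have hxball : ∀ n, xs n ∈ Metric.closedBall (0:E) R := by
    intro n; simpa [Metric.mem_closedBall, dist_zero_right] using hbound n
  obtain ⟨x', hx'ball, φ, hφ, hφtendsto⟩ :=
    (isCompact_closedBall (0:E) R).tendsto_subseq hxball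
  -- x' is a subgradient point for y₀
  have hAcont : Continuous A := by
    rw [← continuousOn_univ]
    exact hA_conv.continuousOn isOpen_univ
  have hx'sub : ∀ z : E, A x' + ⟪y₀, z - x'⟫ ≤ A z := by
    intro z
    have htend : Filter.Tendsto (fun n => A (xs (φ n)) + ⟪ys (φ n), z - xs (φ n)⟫)
        Filter.atTop (nhds (A x' + ⟪y₀, z - x'⟫)) := by
      apply Filter.Tendsto.add
      · exact (hAcont.tendsto x').comp hφtendsto
      · exact ((innerSL ℝ).continuous₂.tendsto (y₀, z - x')).comp
          (((hys_tendsto.comp hφ.tendsto_atTop)).prodMk_nhds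
            (tendsto_const_nhds.sub hφtendsto))
    exact le_of_tendsto htend (Filter.Eventually.of_forall fun n => hxs (φ n) z)
  -- uniqueness forces x' ∈ U
  obtain ⟨x₁, hx₁⟩ := huniq y₀ hy₀
  have hx'eq : x' = x₁ := by
    have : x' ∈ {z : E | ∀ w : E, A z + ⟪y₀, w - z⟫ ≤ A w} := hx'sub
    rw [hx₁] at this; exact this
  obtain ⟨x₀, hx₀U, hx₀sub⟩ : ∃ x ∈ U, ∀ z : E, A x + ⟪y₀, z - x⟫ ≤ A z := by
    rw [hV] at hy₀; exact hy₀
  have hx₀eq : x₀ = x₁ := by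
    have : x₀ ∈ {z : E | ∀ w : E, A z + ⟪y₀, w - z⟫ ≤ A w} := hx₀sub
    rw [hx₁] at this; exact this
  have hx'U : x' ∈ U := by rw [hx'eq, ← hx₀eq]; exact hx₀U
  -- eventually xs (φ n) ∈ U, contradiction
  have := hφtendsto.eventually (hU.mem_nhds hx'U)
  obtain ⟨n, hn⟩ := this.exists
  exact hxsU (φ n) hn
end

section
/- Let b be a natural number, let v ∈ ℝ^b, let n be a nonzero integer, and let π : ℝ^b → ℝ^b/ℤ^b be the quotient map onto the torus (the quotient of the additive group ℝ^b by the subgroup ℤ^b of integer vectors). Let T be the topological closure in ℝ^b/ℤ^b of the subgroup generated by π(v), and let T' be the topological closure of the subgroup generated by π(n • v). Then T' is a subgroup of T, and T' has finite index in T; moreover this index divides |n|. -/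
lemma closure_mult_aux {G : Type*} [AddCommGroup G] [TopologicalSpace G]
    [IsTopologicalAddGroup G] (a : G) (n : ℤ) (hn : n ≠ 0)
    (T T' : AddSubgroup G)
    (hT : T = (AddSubgroup.zmultiples a).topologicalClosure)
    (hT' : T' = (AddSubgroup.zmultiples (n • a)).topologicalClosure) :
    T' ≤ T ∧ T'.relIndex T ≠ 0 ∧ T'.relIndex T ∣ n.natAbs := by
  have ha : a ∈ T := by
    rw [hT]
    exact (AddSubgroup.zmultiples a).le_topologicalClosure
      (AddSubgroup.mem_zmultiples a)
  have hTclosed : IsClosed (T : Set G) := by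
    rw [hT]; exact (AddSubgroup.zmultiples a).isClosed_topologicalClosure
  have hT'closed : IsClosed (T' : Set G) := by
    rw [hT']; exact (AddSubgroup.zmultiples (n • a)).isClosed_topologicalClosure
  have hle : T' ≤ T := by
    rw [hT']
    refine AddSubgroup.topologicalClosure_minimal _ ?_ hTclosed
    rw [hT]
    refine le_trans ?_ (AddSubgroup.zmultiples a).le_topologicalClosure
    intro x hx
    obtain ⟨k, rfl⟩ := AddSubgroup.mem_zmultiples_iff.mp hx
    exact AddSubgroup.mem_zmultiples_iff.mpr ⟨k * n, by rw [mul_smul]⟩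
  refine ⟨hle, ?_⟩
  -- set up the quotient of T by T' ∩ T
  set K : AddSubgroup T := T'.addSubgroupOf T with hK
  have hKclosed : IsClosed (K : Set T) := by
    have : (K : Set T) = (Subtype.val : T → G) ⁻¹' (T' : Set G) := rfl
    rw [this]
    exact hT'closed.preimage continuous_subtype_val
  haveI : IsClosed ((K : AddSubgroup T) : Set T) := hKclosed
  set g : T ⧸ K := QuotientAddGroup.mk' K ⟨a, ha⟩ with hg
  have hna : n • a ∈ T' := by
    rw [hT']
    exact (AddSubgroup.zmultiples (n • a)).le_topologicalClosure
      (AddSubgroup.mem_zmultiples (n • a))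
  have hng : n • g = 0 := by
    rw [hg, ← map_zsmul]
    rw [QuotientAddGroup.mk'_apply, QuotientAddGroup.eq_zero_iff]
    exact hna
  have hord : addOrderOf g ∣ n.natAbs := by
    have := addOrderOf_dvd_iff_zsmul_eq_zero.mpr hng
    exact Int.ofNat_dvd.mp (Int.dvd_natAbs.mpr this)
  have hfin : IsOfFinAddOrder g := by
    rcases (isOfFinAddOrder_iff_zsmul_eq_zero).mpr ⟨n, hn, hng⟩ with h
    exact h
  -- the subgroup generated by g is dense in T ⧸ K
  have hdense : Dense ((AddSubgroup.zmultiples g : AddSubgroup (T ⧸ K)) : Set (T ⧸ K)) := by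
    have hsurj : Function.Surjective (QuotientAddGroup.mk' K) :=
      QuotientAddGroup.mk'_surjective K
    have hcont : Continuous (QuotientAddGroup.mk' K) := continuous_quot_mk
    -- zmultiples ⟨a, ha⟩ is dense in T
    have hdT : Dense ((AddSubgroup.zmultiples (⟨a, ha⟩ : T)) : Set T) := by
      rw [dense_iff_closure_eq]
      ext x
      simp only [Set.mem_univ, iff_true]
      have : (((AddSubgroup.zmultiples (⟨a, ha⟩ : T)) : Set T)) =
          (Subtype.val : T → G) ⁻¹' (AddSubgroup.zmultiples a : Set G) := by
        ext y
        simp only [Set.mem_preimage, SetLike.mem_coe, AddSubgroup.mem_zmultiples_iff]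
        constructor
        · rintro ⟨k, hk⟩; exact ⟨k, by rw [← hk]; rfl⟩
        · rintro ⟨k, hk⟩; exact ⟨k, Subtype.ext hk⟩
      rw [this, closure_subtype, Set.image_preimage_eq_inter_range,
        Subtype.range_coe, Set.inter_eq_self_of_subset_left
          (by rw [hT]; exact (AddSubgroup.zmultiples a).le_topologicalClosure)]
      have hsub : (T : Set G) ⊆ closure (AddSubgroup.zmultiples a : Set G) := by
        rw [hT]
        exact subset_of_eq AddSubgroup.topologicalClosure_coe
      exact hsub x.2
    have himg : ((AddSubgroup.zmultiples g : AddSubgroup (T ⧸ K)) : Set (T ⧸ K)) ⊇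
        (QuotientAddGroup.mk' K) '' (AddSubgroup.zmultiples (⟨a, ha⟩ : T) : Set T) := by
      rintro x ⟨y, hy, rfl⟩
      obtain ⟨k, rfl⟩ := AddSubgroup.mem_zmultiples_iff.mp hy
      exact AddSubgroup.mem_zmultiples_iff.mpr ⟨k, by rw [hg, ← map_zsmul]⟩
    exact Dense.mono himg (hsurj.denseRange.dense_image hcont hdT)
  -- zmultiples g is finite, hence closed, hence everything
  have hfinset : (AddSubgroup.zmultiples g : Set (T ⧸ K)).Finite := by
    have : Finite (AddSubgroup.zmultiples g) := hfin.finite_zmultiples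
    exact (AddSubgroup.zmultiples g : Set (T ⧸ K)).toFinite
  have htop : AddSubgroup.zmultiples g = (⊤ : AddSubgroup (T ⧸ K)) := by
    have hclosed : IsClosed (AddSubgroup.zmultiples g : Set (T ⧸ K)) :=
      hfinset.isClosed
    rw [AddSubgroup.eq_top_iff']
    intro x
    have := hdense.closure_eq
    rw [hclosed.closure_eq] at this
    rw [← SetLike.mem_coe, this]
    trivial
  have hfinQ : Finite (T ⧸ K) := by
    have : Finite (AddSubgroup.zmultiples g) := hfin.finite_zmultiples
    rw [htop] at this
    exact Finite.of_equiv _ (AddSubgroup.topEquiv.toEquiv)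
  have hcard : Nat.card (T ⧸ K) = addOrderOf g := by
    rw [← Nat.card_zmultiples g, htop]
    exact (Nat.card_congr (AddSubgroup.topEquiv.toEquiv)).symm
  have hidx : T'.relIndex T = Nat.card (T ⧸ K) := rfl
  constructor
  · rw [hidx]
    exact Nat.card_ne_zero.mpr ⟨⟨0⟩, hfinQ⟩
  · rw [hidx, hcard]
    exact hord

/-- In the torus `ℝ^b/ℤ^b`, the closure `T'` of the subgroup generated
by `n • v` (for `n` a nonzero integer) is a finite-index subgroup of the closure `T`
of the subgroup generated by `v`, and the index divides `|n|`. -/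
theorem closure_of_multiples_finite_index
    (b : ℕ) (v : Fin b → ℝ) (n : ℤ) (hn : n ≠ 0)
    (L : AddSubgroup (Fin b → ℝ))
    (hL : (L : Set (Fin b → ℝ)) = {x : Fin b → ℝ | ∀ i : Fin b, ∃ m : ℤ, x i = (m : ℝ)})
    (π : (Fin b → ℝ) →+ (Fin b → ℝ) ⧸ L)
    (hπ : π = QuotientAddGroup.mk' L)
    (T T' : AddSubgroup ((Fin b → ℝ) ⧸ L))
    (hT : T = (AddSubgroup.zmultiples (π v)).topologicalClosure)
    (hT' : T' = (AddSubgroup.zmultiples (π (n • v))).topologicalClosure) :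
    T' ≤ T ∧ T'.relIndex T ≠ 0 ∧ T'.relIndex T ∣ n.natAbs := by
  have h : π (n • v) = n • π v := map_zsmul π n v
  rw [h] at hT'
  exact closure_mult_aux (π v) n hn T T' hT hT'
end
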